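/- Let A be a unital C*-algebra, (π, H, Ω) a pointed representation of A, and ω the state ω(a) := ⟨Ω, π(a) Ω⟩. Then: (i) for x ∈ A, ω(x⋆ * x) = 0 if and only if π(x)Ω = 0; (ii) there exists a unique bounded linear map m : H_ω → H satisfying m([a]) = π(a)Ω for all a ∈ A; (iii) m is a linear isometry, satisfies m ∘ π_ω(a) = π(a) ∘ m for all a ∈ A, and m([1_A]) = Ω. -/

import Mathlib

open scoped ComplexOrder InnerProductSpace

/-- A state on a unital C*-algebra `A`. -/
def IsState {A : Type*} [CStarAlgebra A] (ω : A →L[ℂ] ℂ) : Prop :=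
  ω 1 = 1 ∧ ∀ a : A, 0 ≤ ω (star a * a)

/-- Let `(π, H, Ω)` be a pointed representation of `A` with vector state
`ω a = ⟪Ω, π a Ω⟫`, and let `(Hω, q, πω)` be GNS data for `ω` (so `Hω` is the
Hilbert-space completion of `A / N_ω`, `q a = [a]` is the class map with dense range and
`⟪q b, q a⟫ = ω (b⋆ * a)`, and `πω a [b] = [a * b]`).  Then:
(i) `ω (x⋆ * x) = 0 ↔ π x Ω = 0`;
(ii) there is a unique bounded linear map `m : Hω → H` with `m [a] = π a Ω`;
(iii) any such map is a linear isometry, intertwines `πω` and `π`, and sends `[1]` to `Ω`. -/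
theorem gns_comparison_map {A : Type*} [CStarAlgebra A]
    {H : Type*} [NormedAddCommGroup H] [InnerProductSpace ℂ H] [CompleteSpace H]
    (π : A →⋆ₐ[ℂ] (H →L[ℂ] H)) (Ω : H) (hΩ : ‖Ω‖ = 1)
    (ω : A →L[ℂ] ℂ) (hω : ∀ a : A, ω a = ⟪Ω, π a Ω⟫_ℂ)
    -- GNS data for ω
    {Hω : Type*} [NormedAddCommGroup Hω] [InnerProductSpace ℂ Hω] [CompleteSpace Hω]
    (q : A →ₗ[ℂ] Hω) (hq : DenseRange q)
    (hinner : ∀ a b : A, ⟪q b, q a⟫_ℂ = ω (star b * a))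
    (πω : A →⋆ₐ[ℂ] (Hω →L[ℂ] Hω)) (hπω : ∀ a b : A, πω a (q b) = q (a * b)) :
    (∀ x : A, ω (star x * x) = 0 ↔ π x Ω = 0) ∧
    (∃! m : Hω →L[ℂ] H, ∀ a : A, m (q a) = π a Ω) ∧
    (∀ m : Hω →L[ℂ] H, (∀ a : A, m (q a) = π a Ω) →
      (∀ ψ φ : Hω, ⟪m ψ, m φ⟫_ℂ = ⟪ψ, φ⟫_ℂ) ∧
      (∀ (a : A) (x : Hω), m (πω a x) = π a (m x)) ∧
      m (q 1) = Ω) := by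
  classical
  -- key inner-product identity
  have hadj : ∀ a b : A, ⟪Ω, π (star b * a) Ω⟫_ℂ = ⟪π b Ω, π a Ω⟫_ℂ := by
    intro a b
    rw [map_mul, map_star, ContinuousLinearMap.mul_apply,
      ContinuousLinearMap.star_eq_adjoint, ContinuousLinearMap.adjoint_inner_right]
  have hkey : ∀ a b : A, ⟪π b Ω, π a Ω⟫_ℂ = ⟪q b, q a⟫_ℂ := by
    intro a b
    rw [hinner, hω, hadj]
  have hnorm : ∀ a : A, ‖π a Ω‖ = ‖q a‖ := by
    intro a
    rw [norm_eq_sqrt_re_inner (𝕜 := ℂ), norm_eq_sqrt_re_inner (𝕜 := ℂ), hkey]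
  -- part (i)
  have part1 : ∀ x : A, ω (star x * x) = 0 ↔ π x Ω = 0 := by
    intro x
    rw [hω, hadj, inner_self_eq_zero]
  -- the submodule of classes
  set S : Submodule ℂ Hω := LinearMap.range q with hS
  have hdense : DenseRange (S.subtypeL) := by
    have : Dense (S : Set Hω) := by
      simpa [hS, LinearMap.coe_range, DenseRange] using hq
    simpa [DenseRange, Submodule.subtypeL, Subtype.range_coe] using this
  have h_e : IsUniformInducing (S.subtypeL) := isometry_subtype_coe.isUniformInducing
  -- the map on S
  have hwd : ∀ (a a' : A), q a = q a' → π a Ω = π a' Ω := by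
    intro a a' h
    have : ‖π a Ω - π a' Ω‖ = 0 := by
      have h1 : π a Ω - π a' Ω = π (a - a') Ω := by
        rw [map_sub]; simp [ContinuousLinearMap.sub_apply]
      rw [h1, hnorm, map_sub, h, sub_self, norm_zero]
    rw [← sub_eq_zero]; exact norm_eq_zero.mp this
  have hchoose : ∀ s : S, q (LinearMap.mem_range.mp s.2).choose = (s : Hω) :=
    fun s => (LinearMap.mem_range.mp s.2).choose_spec
  have hwd' : ∀ (s : S) (a : A), q a = (s : Hω) →
      π (LinearMap.mem_range.mp s.2).choose Ω = π a Ω := by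
    intro s a h
    exact hwd _ _ ((hchoose s).trans h.symm)
  let f0lin : S →ₗ[ℂ] H :=
    { toFun := fun s => π (LinearMap.mem_range.mp s.2).choose Ω
      map_add' := by
        intro s t
        refine (hwd' (s + t) ((LinearMap.mem_range.mp s.2).choose +
          (LinearMap.mem_range.mp t.2).choose)
          (by rw [map_add, hchoose s, hchoose t]; rfl)).trans ?_
        rw [map_add]; simp [ContinuousLinearMap.add_apply]
      map_smul' := by
        intro c s
        refine (hwd' (c • s) (c • (LinearMap.mem_range.mp s.2).choose)
          (by rw [map_smul, hchoose s]; rfl)).trans ?_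
        rw [map_smul]; simp }
  have f0bound : ∀ s : S, ‖f0lin s‖ ≤ 1 * ‖s‖ := by
    intro s
    have : ‖f0lin s‖ = ‖(s : Hω)‖ := by
      show ‖π (LinearMap.mem_range.mp s.2).choose Ω‖ = _
      rw [hnorm, hchoose]
    rw [this, one_mul]; rfl
  let f0 : S →L[ℂ] H := f0lin.mkContinuous 1 f0bound
  let m₀ : Hω →L[ℂ] H := f0.extend S.subtypeL
  have hm₀ : ∀ a : A, m₀ (q a) = π a Ω := by
    intro a
    have hmem : q a ∈ S := LinearMap.mem_range.mpr ⟨a, rfl⟩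
    have : m₀ (S.subtypeL ⟨q a, hmem⟩) = f0 ⟨q a, hmem⟩ :=
      ContinuousLinearMap.extend_eq f0 hdense h_e _
    rw [show q a = S.subtypeL ⟨q a, hmem⟩ from rfl, this]
    exact hwd' ⟨q a, hmem⟩ a rfl
  refine ⟨part1, ⟨m₀, hm₀, ?_⟩, ?_⟩
  · -- uniqueness
    intro m hm
    apply ContinuousLinearMap.coeFn_injective
    refine hq.equalizer m.continuous m₀.continuous (funext fun a => ?_)
    simp [hm a, hm₀ a]
  · -- properties
    intro m hm
    refine ⟨?_, ?_, ?_⟩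
    · -- isometry (inner products)
      have step1 : ∀ (b : A) (φ : Hω), ⟪m (q b), m φ⟫_ℂ = ⟪q b, φ⟫_ℂ := by
        intro b
        have := hq.equalizer (g := fun φ => ⟪m (q b), m φ⟫_ℂ)
          (h := fun φ => ⟪q b, φ⟫_ℂ)
          (continuous_const.inner m.continuous)
          (continuous_const.inner continuous_id)
          (funext fun a => by simp only [Function.comp_apply, hm, hkey])
        exact fun φ => congrFun this φ
      intro ψ φ
      have := hq.equalizer (g := fun ψ => ⟪m ψ, m φ⟫_ℂ)
        (h := fun ψ => ⟪ψ, φ⟫_ℂ)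
        ((m.continuous.inner continuous_const))
        ((continuous_id.inner continuous_const))
        (funext fun b => by simpa using step1 b φ)
      exact congrFun this ψ
    · -- intertwining
      intro a x
      have := hq.equalizer (g := fun x => m (πω a x)) (h := fun x => π a (m x))
        (m.continuous.comp (πω a).continuous)
        ((π a).continuous.comp m.continuous)
        (funext fun b => by
          simp only [Function.comp_apply, hπω a b, hm (a * b), hm b, map_mul,
            ContinuousLinearMap.mul_apply])
      exact congrFun this x
    · rw [hm 1, map_one, ContinuousLinearMap.one_apply]
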